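/- For c ∈ ℂ, let p_c : ℂ → ℂ be the quadratic polynomial p_c(z) = z² + c, and let p_c^[n] denote its n-th iterate. For every n ≥ 1 there exists a polynomial q ∈ ℂ[X] with natDegree q = 2^n − 1 and leading coefficient 2^n such that q.eval c = (deriv (p_c^[n]))(c) for every c ∈ ℂ. -/

import Mathlib

open Polynomial

noncomputable def Apoly : ℕ → Polynomial ℂ
  | 0 => X
  | n + 1 => Apoly n ^ 2 + X

noncomputable def Dpoly : ℕ → Polynomial ℂ
  | 0 => 1
  | n + 1 => 2 * Apoly n * Dpoly n

lemma Apoly_eval (n : ℕ) (c : ℂ) :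
    (Apoly n).eval c = (fun z : ℂ => z ^ 2 + c)^[n] c := by
  induction n with
  | zero => simp [Apoly]
  | succ n ih =>
    rw [Function.iterate_succ_apply']
    simp [Apoly, ih]

lemma Apoly_aux (n : ℕ) : (Apoly n).Monic ∧ (Apoly n).natDegree = 2 ^ n := by
  induction n with
  | zero => exact ⟨monic_X, by simp [Apoly]⟩
  | succ n ih =>
    obtain ⟨hm, hd⟩ := ih
    have h2 : (Apoly n ^ 2).Monic := hm.pow 2
    have hnd : (Apoly n ^ 2).natDegree = 2 ^ (n + 1) := by
      rw [hm.natDegree_pow, hd]; ring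
    have hlt : (X : Polynomial ℂ).natDegree < (Apoly n ^ 2).natDegree := by
      rw [natDegree_X, hnd]
      exact Nat.one_lt_two_pow_iff.mpr (by omega)
    have hdeg : (X : Polynomial ℂ).degree < (Apoly n ^ 2).degree :=
      degree_lt_degree hlt
    refine ⟨h2.add_of_left hdeg, ?_⟩
    show (Apoly n ^ 2 + X).natDegree = 2 ^ (n + 1)
    rw [natDegree_add_eq_left_of_natDegree_lt hlt, hnd]

lemma Dpoly_aux (n : ℕ) :
    (Dpoly n).natDegree = 2 ^ n - 1 ∧ (Dpoly n).leadingCoeff = (2 : ℂ) ^ n := by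
  induction n with
  | zero => simp [Dpoly]
  | succ n ih =>
    obtain ⟨hd, hl⟩ := ih
    obtain ⟨hAm, hAd⟩ := Apoly_aux n
    have hD0 : Dpoly n ≠ 0 := fun h => by
      rw [h, leadingCoeff_zero] at hl
      exact pow_ne_zero n two_ne_zero hl.symm
    have hlead : (Dpoly (n + 1)).leadingCoeff = (2 : ℂ) ^ (n + 1) := by
      show (2 * Apoly n * Dpoly n).leadingCoeff = _
      rw [leadingCoeff_mul, leadingCoeff_mul, hAm.leadingCoeff, hl]
      simp [leadingCoeff]
      ring
    refine ⟨?_, hlead⟩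
    show (2 * Apoly n * Dpoly n).natDegree = 2 ^ (n + 1) - 1
    rw [natDegree_mul (mul_ne_zero two_ne_zero hAm.ne_zero) hD0,
      natDegree_mul two_ne_zero hAm.ne_zero, hAd, hd]
    simp only [Polynomial.natDegree_ofNat]
    have : 1 ≤ 2 ^ n := Nat.one_le_two_pow
    omega

lemma hasDerivAt_iter (c : ℂ) (n : ℕ) :
    HasDerivAt ((fun z : ℂ => z ^ 2 + c)^[n]) ((Dpoly n).eval c) c := by
  induction n with
  | zero => simpa [Dpoly] using hasDerivAt_id c
  | succ n ih =>
    have hf : HasDerivAt (fun z : ℂ => z ^ 2 + c)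
        (2 * (fun z : ℂ => z ^ 2 + c)^[n] c) ((fun z : ℂ => z ^ 2 + c)^[n] c) := by
      simpa using ((hasDerivAt_pow 2 ((fun z : ℂ => z ^ 2 + c)^[n] c)).add_const c)
    have := hf.comp c ih
    rw [Function.iterate_succ']
    refine this.congr_deriv ?_
    simp [Dpoly, Apoly_eval, mul_comm, mul_assoc, mul_left_comm]

theorem stmt_11 (n : ℕ) (hn : 1 ≤ n) :
    ∃ q : Polynomial ℂ, q.natDegree = 2 ^ n - 1 ∧ q.leadingCoeff = (2 : ℂ) ^ n ∧
      ∀ c : ℂ, q.eval c = deriv ((fun z : ℂ => z ^ 2 + c)^[n]) c := by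
  exact ⟨Dpoly n, (Dpoly_aux n).1, (Dpoly_aux n).2,
    fun c => ((hasDerivAt_iter c n).deriv).symm⟩
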